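/- Let π ∈ F_r[T] be irreducible of degree d, and let E_j be the j-th F_r-linear Carlitz polynomial (E_j = e_j/D_j with e_j(x) = ∏_{deg h < j}(x - h), D_j = ∏_{monic, deg = j} h). If j < dn, then E_j(π^n g) ≡ 0 mod π for all g ∈ F_r[T]. -/

import Mathlib

open Polynomial Finset UniqueFactorizationMonoid

section Stmt13Aux
set_option linter.unusedSectionVars false

variable {𝔽 : Type*} [Field 𝔽] [DecidableEq 𝔽]

private theorem aux_cnt_dvd {q x : Polynomial 𝔽}
    (hq : Irreducible q) (hqn : normalize q = q) (hx : x ≠ 0) (k : ℕ) :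
    q ^ k ∣ x ↔ k ≤ (normalizedFactors x).count q := by
  rw [pow_dvd_iff_le_emultiplicity, emultiplicity_eq_count_normalizedFactors hq hx, hqn,
    Nat.cast_le]

private theorem aux_cnt_prod {ι : Type*} (s : Finset ι) (f : ι → Polynomial 𝔽)
    (hf : ∀ i ∈ s, f i ≠ 0) (q : Polynomial 𝔽) :
    (normalizedFactors (∏ i ∈ s, f i)).count q = ∑ i ∈ s, (normalizedFactors (f i)).count q := by
  classical
  induction s using Finset.cons_induction with
  | empty => simp [normalizedFactors_one]
  | cons a s ha ih =>
      rw [Finset.prod_cons, normalizedFactors_mul (hf a (Finset.mem_cons_self a s))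
        (Finset.prod_ne_zero_iff.2 fun i hi => hf i (Finset.mem_cons_of_mem hi)),
        Multiset.count_add, Finset.sum_cons, ih (fun i hi => hf i (Finset.mem_cons_of_mem hi))]

private theorem aux_cnt_le_natDegree {q x : Polynomial 𝔽}
    (hq : Irreducible q) (hqn : normalize q = q) (hx : x ≠ 0) :
    (normalizedFactors x).count q ≤ x.natDegree := by
  have h := (aux_cnt_dvd hq hqn hx _).2 le_rfl
  calc (normalizedFactors x).count q = (normalizedFactors x).count q * 1 := (mul_one _).symm
    _ ≤ (normalizedFactors x).count q * q.natDegree :=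
        Nat.mul_le_mul_left _ hq.natDegree_pos
    _ = (q ^ ((normalizedFactors x).count q)).natDegree := by rw [natDegree_pow]
    _ ≤ x.natDegree := natDegree_le_of_dvd h hx

private theorem aux_cnt_card {q x : Polynomial 𝔽} {N : ℕ}
    [DecidablePred fun k : ℕ => q ^ k ∣ x]
    (hq : Irreducible q) (hqn : normalize q = q) (hx : x ≠ 0)
    (hN : x.natDegree ≤ N) :
    (normalizedFactors x).count q = ((Finset.Icc 1 N).filter (fun k => q ^ k ∣ x)).card := by
  have h1 : (Finset.Icc 1 N).filter (fun k => q ^ k ∣ x)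
      = Finset.Icc 1 ((normalizedFactors x).count q) := by
    ext k
    simp only [Finset.mem_filter, Finset.mem_Icc, aux_cnt_dvd hq hqn hx]
    have := le_trans (aux_cnt_le_natDegree hq hqn hx) hN
    omega
  rw [h1, Nat.card_Icc]
  omega

private theorem aux_swap {α β : Type*} (S : Finset α) (T : Finset β) (p : α → β → Prop)
    [∀ a b, Decidable (p a b)] :
    ∑ h ∈ S, (T.filter (p h)).card = ∑ k ∈ T, (S.filter (fun h => p h k)).card := by
  simp only [Finset.card_filter]
  exact Finset.sum_comm

variable {j : ℕ}

private noncomputable def phi (j : ℕ) (c : Fin j → 𝔽) : Polynomial 𝔽 :=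
  ∑ i : Fin j, Polynomial.C (c i) * Polynomial.X ^ (i : ℕ)

private theorem phi_coeff (c : Fin j → 𝔽) (k : ℕ) :
    (phi j c).coeff k = if h : k < j then c ⟨k, h⟩ else 0 := by
  rw [phi, Polynomial.finset_sum_coeff]
  simp only [Polynomial.coeff_C_mul, Polynomial.coeff_X_pow, mul_ite, mul_one, mul_zero]
  split
  · next hk =>
      rw [Finset.sum_eq_single (⟨k, hk⟩ : Fin j)]
      · simp
      · intro b _ hb
        simp only [ite_eq_right_iff]
        intro hbk
        exact absurd (Fin.ext hbk.symm) hb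
      · simp
  · next hk =>
      refine Finset.sum_eq_zero fun i _ => ?_
      simp only [ite_eq_right_iff]
      intro hik
      exact absurd (hik ▸ i.isLt) hk

private theorem phi_degree (c : Fin j → 𝔽) : (phi j c).degree < (j : WithBot ℕ) := by
  rw [Polynomial.degree_lt_iff_coeff_zero]
  intro m hm
  rw [phi_coeff, dif_neg]
  exact fun h => absurd hm (by exact_mod_cast not_le.2 h)

private theorem phi_inj : Function.Injective (phi j (𝔽 := 𝔽)) := by
  intro c c' h
  funext i
  have := congrArg (fun p => Polynomial.coeff p i) h
  simpa [phi_coeff] using this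

private theorem phi_surj {h : Polynomial 𝔽} (hh : h.degree < (j : WithBot ℕ)) :
    ∃ c : Fin j → 𝔽, phi j c = h := by
  refine ⟨fun i => h.coeff i, Polynomial.ext fun k => ?_⟩
  rw [phi_coeff]
  split
  · rfl
  · next hk =>
      exact (Polynomial.coeff_eq_zero_of_degree_lt
        (lt_of_lt_of_le hh (by exact_mod_cast not_lt.1 hk))).symm

end Stmt13Aux

/-- for π irreducible of degree d in F_r[T] and j < dn,
E_j(π^n g) ≡ 0 mod π; equivalently π·D_j divides e_j(π^n g), where
e_j(x) = ∏_(deg h < j) (x - h) and D_j = ∏_(monic, deg = j) h, with polynomials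
of degree < j (resp. monic of degree j) parametrized by coefficient tuples. -/
theorem stmt_13 (𝔽 : Type*) [Field 𝔽] [Fintype 𝔽] (π : Polynomial 𝔽)
    (hπ : Irreducible π) (d : ℕ) (hd : π.natDegree = d)
    (n j : ℕ) (hj : j < d * n) (g : Polynomial 𝔽) :
    π * (∏ c : Fin j → 𝔽, ((Polynomial.X : Polynomial 𝔽) ^ j +
          ∑ i : Fin j, Polynomial.C (c i) * Polynomial.X ^ (i : ℕ))) ∣
      ∏ c : Fin j → 𝔽, (π ^ n * g -
          ∑ i : Fin j, Polynomial.C (c i) * Polynomial.X ^ (i : ℕ)) := by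
  classical
  letI : DecidableEq 𝔽 := Classical.decEq 𝔽
  have hd1 : 1 ≤ d := hd ▸ hπ.natDegree_pos
  have hn1 : 1 ≤ n := by
    rcases Nat.eq_zero_or_pos n with h | h
    · subst h; rw [mul_zero] at hj; omega
    · exact h
  set a : Polynomial 𝔽 := π ^ n * g with ha
  show π * (∏ c : Fin j → 𝔽, (X ^ j + phi j c)) ∣ ∏ c : Fin j → 𝔽, (a - phi j c)
  set S : Finset (Polynomial 𝔽) := Finset.univ.image (phi j) with hS
  have hinj : ∀ x ∈ (Finset.univ : Finset (Fin j → 𝔽)), ∀ y ∈ Finset.univ,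
      phi j x = phi j y → x = y := fun x _ y _ h => phi_inj h
  have hmemS : ∀ {h : Polynomial 𝔽}, h ∈ S ↔ h.degree < (j : WithBot ℕ) := by
    intro h
    constructor
    · intro hmem
      obtain ⟨c, -, rfl⟩ := Finset.mem_image.1 hmem
      exact phi_degree c
    · intro hdeg
      obtain ⟨c, rfl⟩ := phi_surj hdeg
      exact Finset.mem_image_of_mem _ (Finset.mem_univ c)
  have e1 : ∏ h ∈ S, (X ^ j + h) = ∏ c : Fin j → 𝔽, (X ^ j + phi j c) :=
    Finset.prod_image hinj
  have e2 : ∏ h ∈ S, (a - h) = ∏ c : Fin j → 𝔽, (a - phi j c) :=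
    Finset.prod_image hinj
  rw [← e1, ← e2]
  by_cases haS : a ∈ S
  · rw [Finset.prod_eq_zero haS (sub_self a)]
    exact dvd_zero _
  -- main case
  have h0S : (0 : Polynomial 𝔽) ∈ S := hmemS.2 (by rw [degree_zero]; exact_mod_cast WithBot.bot_lt_coe j)
  have hg0 : g ≠ 0 := by
    rintro rfl
    exact haS (by rw [ha, mul_zero]; exact h0S)
  have ha0 : a ≠ 0 := mul_ne_zero (pow_ne_zero _ hπ.ne_zero) hg0
  have hsub0 : ∀ h ∈ S, a - h ≠ 0 := by
    intro h hh h0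
    exact haS (by rw [sub_eq_zero.1 h0]; exact hh)
  have hdegX : ∀ h ∈ S, (X ^ j + h : Polynomial 𝔽).degree = (j : WithBot ℕ) := by
    intro h hh
    rw [degree_add_eq_left_of_degree_lt (by rw [degree_X_pow]; exact hmemS.1 hh), degree_X_pow]
  have hX0 : ∀ h ∈ S, (X ^ j + h : Polynomial 𝔽) ≠ 0 := by
    intro h hh h0
    have := hdegX h hh
    rw [h0, degree_zero] at this
    exact absurd this.symm (by simp)
  have hXnat : ∀ h ∈ S, (X ^ j + h : Polynomial 𝔽).natDegree = j :=
    fun h hh => natDegree_eq_of_degree_eq_some (hdegX h hh)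
  have hhnat : ∀ h ∈ S, h.natDegree ≤ j :=
    fun h hh => natDegree_le_iff_degree_le.2 (hmemS.1 hh).le
  set N : ℕ := j + a.natDegree with hN
  have hnN : n ≤ N := by
    have h1 : a.natDegree = n * d + g.natDegree := by
      rw [ha, natDegree_mul (pow_ne_zero _ hπ.ne_zero) hg0, natDegree_pow, hd]
    have h2 : n ≤ n * d := Nat.le_mul_of_pos_right n (by omega)
    omega
  have hL0 : π * ∏ h ∈ S, (X ^ j + h) ≠ 0 :=
    mul_ne_zero hπ.ne_zero (Finset.prod_ne_zero_iff.2 hX0)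
  have hR0 : (∏ h ∈ S, (a - h)) ≠ 0 := Finset.prod_ne_zero_iff.2 hsub0
  rw [UniqueFactorizationMonoid.dvd_iff_normalizedFactors_le_normalizedFactors hL0 hR0,
    Multiset.le_iff_count]
  intro q
  by_cases hqmem : q ∈ normalizedFactors (π * ∏ h ∈ S, (X ^ j + h))
  swap
  · simp [Multiset.count_eq_zero_of_notMem hqmem]
  have hqirr : Irreducible q := irreducible_of_normalized_factor q hqmem
  have hqn : normalize q = q := normalize_normalized_factor q hqmem
  have hq0 : q ≠ 0 := hqirr.ne_zero
  have hqmonic : q.Monic := by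
    have := Polynomial.monic_normalize hq0
    rwa [hqn] at this
  have hm1 : 1 ≤ q.natDegree := hqirr.natDegree_pos
  rw [normalizedFactors_mul hπ.ne_zero (Finset.prod_ne_zero_iff.2 hX0), Multiset.count_add,
    aux_cnt_prod S _ hX0 q, aux_cnt_prod S _ hsub0 q]
  have hcX : ∀ h ∈ S, (normalizedFactors (X ^ j + h)).count q
      = ((Finset.Icc 1 N).filter fun k => q ^ k ∣ X ^ j + h).card := fun h hh =>
    aux_cnt_card hqirr hqn (hX0 h hh) (by rw [hXnat h hh]; omega)
  have hcR : ∀ h ∈ S, (normalizedFactors (a - h)).count q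
      = ((Finset.Icc 1 N).filter fun k => q ^ k ∣ a - h).card := fun h hh =>
    aux_cnt_card hqirr hqn (hsub0 h hh) (by
      refine le_trans (natDegree_sub_le _ _) ?_
      have := hhnat h hh
      simp only [max_le_iff]
      omega)
  rw [Finset.sum_congr rfl hcX, Finset.sum_congr rfl hcR,
    aux_swap S (Finset.Icc 1 N) (fun h k => q ^ k ∣ X ^ j + h),
    aux_swap S (Finset.Icc 1 N) (fun h k => q ^ k ∣ a - h)]
  -- per-k facts
  have keyEmpty : ∀ k : ℕ, j < k * q.natDegree →
      (S.filter fun h => q ^ k ∣ X ^ j + h) = ∅ := by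
    intro k hk
    refine Finset.filter_eq_empty_iff.2 fun {h} hh hdvd => ?_
    have h1 : (q ^ k).natDegree ≤ (X ^ j + h).natDegree :=
      natDegree_le_of_dvd hdvd (hX0 h hh)
    rw [natDegree_pow, hXnat h hh] at h1
    omega
  have key : ∀ k, 1 ≤ k →
      (S.filter fun h => q ^ k ∣ X ^ j + h).card ≤ (S.filter fun h => q ^ k ∣ a - h).card := by
    intro k hk1
    by_cases hmk : q.natDegree * k ≤ j
    · refine Finset.card_le_card_of_injOn (fun h => h + (a + X ^ j) %ₘ q ^ k) ?_ ?_
      · intro h hh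
        simp only [Finset.mem_coe, Finset.mem_filter] at hh ⊢
        obtain ⟨hhS, hdvd⟩ := hh
        refine ⟨hmemS.2 ?_, ?_⟩
        · have hrem : ((a + X ^ j) %ₘ q ^ k).degree < (j : WithBot ℕ) := by
            refine lt_of_lt_of_le (degree_modByMonic_lt _ (hqmonic.pow k)) ?_
            rw [degree_eq_natDegree (pow_ne_zero k hq0), natDegree_pow]
            exact_mod_cast (by rw [Nat.mul_comm]; omega : k * q.natDegree ≤ j)
          exact lt_of_le_of_lt (degree_add_le _ _) (max_lt (hmemS.1 hhS) hrem)
        · have h2 : q ^ k ∣ (a + X ^ j) - (a + X ^ j) %ₘ q ^ k :=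
            ⟨(a + X ^ j) /ₘ q ^ k, by
              rw [modByMonic_eq_sub_mul_div _ (q ^ k)]; ring⟩
          have h3 : a - (h + (a + X ^ j) %ₘ q ^ k)
              = ((a + X ^ j) - (a + X ^ j) %ₘ q ^ k) - (X ^ j + h) := by ring
          rw [h3]
          exact dvd_sub h2 hdvd
      · intro x _ y _ hxy
        exact add_right_cancel hxy
    · rw [keyEmpty k (by rw [Nat.mul_comm]; omega)]
      simp
  by_cases hqπ : q = normalize π
  · have hcπ : (normalizedFactors π).count q = 1 := by
      rw [normalizedFactors_irreducible hπ, hqπ, Multiset.count_singleton, if_pos rfl]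
    have hqd : q.natDegree = d := by
      rw [hqπ, ← hd]
      exact natDegree_eq_of_degree_eq degree_normalize
    have hk0n : j / d + 1 ≤ n := by
      have := (Nat.div_lt_iff_lt_mul (by omega : 0 < d)).2 (by rwa [mul_comm] at hj)
      omega
    have hk0mem : j / d + 1 ∈ Finset.Icc 1 N :=
      Finset.mem_Icc.2 ⟨Nat.le_add_left 1 _, le_trans hk0n hnN⟩
    have hdk0 : j < d * (j / d + 1) := by
      have h1 := Nat.div_add_mod j d
      have h2 := Nat.mod_lt j (show 0 < d by omega)
      have h3 : d * (j / d + 1) = d * (j / d) + d := by rw [Nat.mul_add, mul_one]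
      omega
    have hLk0 : (S.filter fun h => q ^ (j / d + 1) ∣ X ^ j + h) = ∅ :=
      keyEmpty (j / d + 1) (by rw [hqd, Nat.mul_comm]; exact hdk0)
    have hRk0 : 1 ≤ (S.filter fun h => q ^ (j / d + 1) ∣ a - h).card := by
      refine Finset.card_pos.2 ⟨0, Finset.mem_filter.2 ⟨h0S, ?_⟩⟩
      rw [sub_zero, ha]
      have hq1 : q ^ (j / d + 1) ∣ π ^ (j / d + 1) := by
        rw [hqπ]
        exact (Associated.pow_pow (normalize_associated π)).dvd
      exact dvd_trans hq1 (dvd_trans (pow_dvd_pow π hk0n) (dvd_mul_right _ _))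
    rw [hcπ]
    have step : ∀ k ∈ Finset.Icc 1 N,
        (if k = j / d + 1 then 1 else 0) + (S.filter fun h => q ^ k ∣ X ^ j + h).card
          ≤ (S.filter fun h => q ^ k ∣ a - h).card := by
      intro k hk
      by_cases h : k = j / d + 1
      · subst h
        rw [hLk0]
        simpa using hRk0
      · rw [if_neg h, zero_add]
        exact key k (Finset.mem_Icc.1 hk).1
    calc 1 + ∑ k ∈ Finset.Icc 1 N, (S.filter fun h => q ^ k ∣ X ^ j + h).card
        = ∑ k ∈ Finset.Icc 1 N,
            ((if k = j / d + 1 then 1 else 0) + (S.filter fun h => q ^ k ∣ X ^ j + h).card) := by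
          rw [Finset.sum_add_distrib, Finset.sum_ite_eq' (Finset.Icc 1 N) (j / d + 1) (fun _ => 1),
            if_pos hk0mem]
      _ ≤ ∑ k ∈ Finset.Icc 1 N, (S.filter fun h => q ^ k ∣ a - h).card :=
          Finset.sum_le_sum step
  · have hcπ : (normalizedFactors π).count q = 0 := by
      rw [normalizedFactors_irreducible hπ, Multiset.count_singleton, if_neg hqπ]
    rw [hcπ, zero_add]
    exact Finset.sum_le_sum fun k hk => key k (Finset.mem_Icc.1 hk).1
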